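/- Quadratic-form identity for linear measurement models: with ε̄ = y − H x̄ the prior innovation and ε̂ = y − H x̂ the posterior innovation, where x̂ = x̄ + K (y − H x̄), one has ε̂ᵀ Ŝ⁻¹ ε̂ = ε̄ᵀ S⁻¹ ε̄. -/

import Mathlib

open Matrix

private lemma sandwich_dot {m : ℕ} (M A : Matrix (Fin m) (Fin m) ℝ) (e : Fin m → ℝ) :
    (M *ᵥ e) ⬝ᵥ (A *ᵥ (M *ᵥ e)) = e ⬝ᵥ ((Mᵀ * A * M) *ᵥ e) := by
  rw [mulVec_mulVec, dotProduct_mulVec, dotProduct_mulVec, ← vecMul_transpose,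
    vecMul_vecMul, Matrix.mul_assoc]

theorem quadratic_form_identity
    (n m : ℕ) (hn : 0 < n) (hm : 0 < m)
    (H : Matrix (Fin m) (Fin n) ℝ)
    (R : Matrix (Fin m) (Fin m) ℝ) (hR : R.PosDef)
    (Pbar : Matrix (Fin n) (Fin n) ℝ) (hPbar : Pbar.PosDef)
    (xbar : Fin n → ℝ) (y : Fin m → ℝ)
    (S : Matrix (Fin m) (Fin m) ℝ) (hS : S = H * Pbar * Hᵀ + R)
    (K : Matrix (Fin n) (Fin m) ℝ) (hK : K = Pbar * Hᵀ * S⁻¹)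
    (xhat : Fin n → ℝ) (hxhat : xhat = xbar + K *ᵥ (y - H *ᵥ xbar))
    (Phat : Matrix (Fin n) (Fin n) ℝ) (hPhat : Phat = Pbar - K * H * Pbar)
    (Shat : Matrix (Fin m) (Fin m) ℝ)
    (hShat : Shat = H * Phat * Hᵀ + R - H * K * R - (H * K * R)ᵀ) :
    (y - H *ᵥ xhat) ⬝ᵥ (Shat⁻¹ *ᵥ (y - H *ᵥ xhat)) =
      (y - H *ᵥ xbar) ⬝ᵥ (S⁻¹ *ᵥ (y - H *ᵥ xbar)) := by
  have hA : (H * Pbar * Hᵀ).PosSemidef := by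
    have := hPbar.posSemidef.mul_mul_conjTranspose_same H
    simpa [Matrix.conjTranspose_eq_transpose_of_trivial, Matrix.mul_assoc] using this
  have hSpd : S.PosDef := hS ▸ Matrix.PosDef.posSemidef_add hA hR
  have hSd : IsUnit S.det := isUnit_iff_ne_zero.mpr hSpd.det_pos.ne'
  have hRd : IsUnit R.det := isUnit_iff_ne_zero.mpr hR.det_pos.ne'
  have hSinvS : S⁻¹ * S = 1 := nonsing_inv_mul S hSd
  have hSSinv : S * S⁻¹ = 1 := mul_nonsing_inv S hSd
  have hRinvR : R⁻¹ * R = 1 := nonsing_inv_mul R hRd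
  have hRRinv : R * R⁻¹ = 1 := mul_nonsing_inv R hRd
  have hSt : Sᵀ = S := hSpd.isHermitian
  have hRt : Rᵀ = R := hR.isHermitian
  have hSit : S⁻¹ᵀ = S⁻¹ := by rw [transpose_nonsing_inv, hSt]
  have hAeq : H * Pbar * Hᵀ = S - R := by rw [hS]; abel
  have hHKm : H * K = (S - R) * S⁻¹ := by rw [hK, ← hAeq]; simp [Matrix.mul_assoc]
  have hHK : (1 : Matrix (Fin m) (Fin m) ℝ) - H * K = R * S⁻¹ := by
    rw [hHKm, Matrix.sub_mul, hSSinv]; noncomm_ring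
  have hShatEq : Shat = R * S⁻¹ * R := by
    have h1 : H * Phat * Hᵀ = (S - R) - (S - R) * S⁻¹ * (S - R) := by
      rw [hPhat, hK, ← hAeq, Matrix.mul_sub, Matrix.sub_mul]; simp [Matrix.mul_assoc]
    have h2 : (H * K * R)ᵀ = R * S⁻¹ * (S - R) := by
      rw [hHKm, transpose_mul, transpose_mul, hRt, hSit, transpose_sub, hSt, hRt,
        Matrix.mul_assoc]
    rw [hShat, h1, h2, hHKm]
    have expand : (S - R) - (S - R) * S⁻¹ * (S - R) + R - (S - R) * S⁻¹ * R
        - R * S⁻¹ * (S - R)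
        = S - (S - R) * (S⁻¹ * S) - R * (S⁻¹ * S) + R * S⁻¹ * R := by noncomm_ring
    rw [expand, hSinvS, Matrix.mul_one, Matrix.mul_one]
    noncomm_ring
  have hShatInv : Shat⁻¹ = R⁻¹ * S * R⁻¹ := by
    apply inv_eq_right_inv
    rw [hShatEq]
    calc R * S⁻¹ * R * (R⁻¹ * S * R⁻¹)
        = R * (S⁻¹ * ((R * R⁻¹) * S)) * R⁻¹ := by noncomm_ring
      _ = 1 := by rw [hRRinv, Matrix.one_mul, hSinvS, Matrix.mul_one, hRRinv]
  have hres : y - H *ᵥ xhat = ((1 : Matrix (Fin m) (Fin m) ℝ) - H * K) *ᵥ (y - H *ᵥ xbar) := by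
    rw [hxhat, mulVec_add, sub_add_eq_sub_sub, Matrix.sub_mulVec, Matrix.one_mulVec,
      mulVec_mulVec]
  have hM : ((1 : Matrix (Fin m) (Fin m) ℝ) - H * K)ᵀ * Shat⁻¹
      * ((1 : Matrix (Fin m) (Fin m) ℝ) - H * K) = S⁻¹ := by
    rw [hHK, hShatInv, transpose_mul, hSit, hRt]
    calc S⁻¹ * R * (R⁻¹ * S * R⁻¹) * (R * S⁻¹)
        = S⁻¹ * ((R * R⁻¹) * S * (R⁻¹ * R)) * S⁻¹ := by noncomm_ring
      _ = S⁻¹ := by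
          rw [hRRinv, hRinvR, Matrix.one_mul, Matrix.mul_one, hSinvS, Matrix.one_mul]
  rw [hres, sandwich_dot, hM]
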